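/- Assume every state of S has an edge to s_f (all states are terminating, S ≡ X), and let the reward be r(s, s') = E(s) − E(s') + α log P_B(s|s') for every edge s → s' with s' ∈ S, and r(s, s_f) = 0. Then for every edge s → s' with s' ∈ S, the π-SQL residual equals −α times the Modified Detailed Balance residual: α (log P_F(s'|s) − log P_F(s_f|s) + log P_F(s_f|s')) − r(s, s') = −α [log(exp(−E(s')/α) P_B(s|s') P_F(s_f|s)) − log(exp(−E(s)/α) P_F(s'|s) P_F(s_f|s'))]. -/
import Mathlib


/-- Assume every state of `S` has an edge to `s_f` (all states are
terminating) and the reward is `r(s,s') = E(s) - E(s') + α log P_B(s|s')` on edges with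
`s' ∈ S`, and `r(s,s_f) = 0`. Then for every such edge the π-SQL residual equals `-α`
times the Modified Detailed Balance residual. -/
theorem pi_sql_residual_eq_modified_db_residual
    {V : Type*} [Fintype V] [DecidableEq V]
    (E : V → V → Prop) [DecidableRel E] (s0 sf : V)
    (hacyc : ∀ v : V, ¬ Relation.TransGen E v v)
    (hsink : ∀ v : V, ¬ E sf v)
    (hreach : ∀ v : V, Relation.ReflTransGen E s0 v)
    (α : ℝ) (hα : 0 < α)
    (En : V → ℝ)
    (PB : V → V → ℝ)
    (hPBpos : ∀ s s' : V, E s s' → s' ≠ sf → 0 < PB s s')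
    (hPBsum : ∀ s' : V, s' ≠ sf → s' ≠ s0 →
      ∑ s ∈ Finset.univ.filter (fun s => E s s'), PB s s' = 1)
    (PF : V → V → ℝ) (hPFpos : ∀ s s' : V, E s s' → 0 < PF s s')
    -- all states are terminating: S ≡ X
    (hterm : ∀ s : V, s ≠ sf → E s sf)
    -- corrected reward with reshaping by the energy
    (r : V → V → ℝ)
    (hr : ∀ s s' : V, E s s' → s' ≠ sf →
      r s s' = En s - En s' + α * Real.log (PB s s'))
    (hrf : ∀ s : V, s ≠ sf → r s sf = 0) :
    ∀ s s' : V, E s s' → s' ≠ sf →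
      -- Δ_{π-SQL}(s,s') = -α · Δ_{M-DB}(s,s')
      α * (Real.log (PF s s') - Real.log (PF s sf) + Real.log (PF s' sf)) - r s s'
        = -α * (Real.log (Real.exp (-En s' / α) * PB s s' * PF s sf)
            - Real.log (Real.exp (-En s / α) * PF s s' * PF s' sf)) := by
  intro s s' hE hs'
  have hs : s ≠ sf := fun h => hsink s' (h ▸ hE) |>.elim
  have hPB := hPBpos s s' hE hs'
  have hPF1 := hPFpos s s' hE
  have hPF2 := hPFpos s sf (hterm s hs)
  have hPF3 := hPFpos s' sf (hterm s' hs')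
  rw [hr s s' hE hs', Real.log_mul (by positivity) hPF2.ne',
    Real.log_mul (Real.exp_pos _).ne' hPB.ne',
    Real.log_mul (by positivity) hPF3.ne',
    Real.log_mul (Real.exp_pos _).ne' hPF1.ne', Real.log_exp, Real.log_exp]
  field_simp
  ring
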